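/- arXiv:2501.00503 — 2 statements merged into one kernel-verified Lean document; each statement's English description precedes it below -/
import Mathlib

section
/- An ideal I on ℕ is equal to the intersection of a family of matrix summability ideals if and only if for every A ∉ I one has I↾A ≤_K I_d, where I_d is the ideal of asymptotic density zero sets. -/
open Filter

/-- An ideal on `ℕ` containing all finite sets. -/
def IsIdeal (I : Set (Set ℕ)) : Prop :=
  (∀ A : Set ℕ, A.Finite → A ∈ I) ∧ Set.univ ∉ I ∧
    (∀ A B : Set ℕ, A ⊆ B → B ∈ I → A ∈ I) ∧
    ∀ A B : Set ℕ, A ∈ I → B ∈ I → A ∪ B ∈ I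

/-- A regular (nonnegative) matrix. -/
def IsRegularMatrix (a : ℕ → ℕ → ℝ) : Prop :=
  (∀ i k, 0 ≤ a i k) ∧ (∀ i, Summable (a i)) ∧ (∃ M : ℝ, ∀ i, ∑' k, a i k ≤ M) ∧
    Tendsto (fun i => ∑' k, a i k) atTop (nhds 1) ∧
    ∀ k, Tendsto (fun i => a i k) atTop (nhds 0)

/-- The matrix summability ideal generated by a matrix `a`. -/
def matrixIdeal (a : ℕ → ℕ → ℝ) : Set (Set ℕ) :=
  {B | Tendsto (fun i => ∑' k, B.indicator (a i) k) atTop (nhds 0)}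

/-- The ideal of asymptotic density zero sets. -/
def densityZero : Set (Set ℕ) :=
  {A | Tendsto (fun n => ((A ∩ Set.Iio n).ncard : ℝ) / n) atTop (nhds 0)}

open scoped Classical

/-- counting function -/
noncomputable def cnt (f : ℕ → ℕ) (S : Set ℕ) (n : ℕ) : ℕ :=
  ((Finset.range n).filter (fun m => f m ∈ S)).card

lemma ncard_bridge (f : ℕ → ℕ) (S : Set ℕ) (n : ℕ) :
    (f ⁻¹' S ∩ Set.Iio n).ncard = cnt f S n := by
  have h : f ⁻¹' S ∩ Set.Iio n = ↑((Finset.range n).filter (fun m => f m ∈ S)) := by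
    ext m; simp [Set.mem_Iio, and_comm]
  rw [h, Set.ncard_coe_finset, cnt]

lemma mem_densityZero_iff (f : ℕ → ℕ) (S : Set ℕ) :
    f ⁻¹' S ∈ densityZero ↔
      Tendsto (fun n => (cnt f S n : ℝ) / n) atTop (nhds 0) := by
  unfold densityZero
  simp only [Set.mem_setOf_eq, ncard_bridge]

noncomputable def mat (f : ℕ → ℕ) (i k : ℕ) : ℝ := (cnt f {k} i : ℝ) / i

lemma cnt_zero_of_not_mem_image (f : ℕ → ℕ) (i k : ℕ)
    (h : k ∉ (Finset.range i).image f) : cnt f {k} i = 0 := by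
  unfold cnt
  simp only [Finset.card_eq_zero, Finset.filter_eq_empty_iff]
  intro m hm hmk
  simp only [Set.mem_singleton_iff] at hmk
  exact h (Finset.mem_image.2 ⟨m, hm, hmk⟩)

lemma cnt_sum (f : ℕ → ℕ) (S : Set ℕ) (i : ℕ) :
    ∑' k, S.indicator (fun k => (cnt f {k} i : ℝ)) k = (cnt f S i : ℝ) := by
  have hsupp : ∀ k ∉ (Finset.range i).image f,
      S.indicator (fun k => (cnt f {k} i : ℝ)) k = 0 := by
    intro k hk
    rcases Set.indicator_eq_zero_or_self S (fun k => (cnt f {k} i : ℝ)) k with h | h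
    · exact h
    · rw [h, cnt_zero_of_not_mem_image f i k hk]; simp
  rw [tsum_eq_sum hsupp]
  have hsum : ∑ k ∈ (Finset.range i).image f, S.indicator (fun k => (cnt f {k} i : ℝ)) k
      = ∑ k ∈ ((Finset.range i).image f).filter (· ∈ S), (cnt f {k} i : ℝ) := by
    rw [Finset.sum_filter]
    refine Finset.sum_congr rfl fun k _ => ?_
    by_cases hk : k ∈ S <;> simp [Set.indicator, hk]
  rw [hsum]
  have hcard : cnt f S i
      = ∑ k ∈ ((Finset.range i).image f).filter (· ∈ S),
          (((Finset.range i).filter (fun m => f m ∈ S)).filter (fun m => f m = k)).card := by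
    apply Finset.card_eq_sum_card_fiberwise
    intro m hm
    simp only [Finset.coe_filter, Set.mem_setOf_eq, Finset.mem_range] at hm
    simp only [Finset.mem_coe, Finset.mem_filter, Finset.mem_image]
    exact ⟨⟨m, Finset.mem_range.2 hm.1, rfl⟩, hm.2⟩
  rw [hcard, Nat.cast_sum]
  refine Finset.sum_congr rfl fun k hk => ?_
  simp only [Finset.mem_filter] at hk
  rw [Finset.filter_filter]
  norm_cast
  unfold cnt
  congr 1
  ext m
  simp only [Finset.mem_filter, Finset.mem_range, Set.mem_singleton_iff]
  constructor
  · rintro ⟨hm, hfk⟩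
    exact ⟨hm, hfk ▸ hk.2, hfk⟩
  · rintro ⟨hm, _, hfk⟩
    exact ⟨hm, hfk⟩

lemma tsum_indicator_mat (f : ℕ → ℕ) (S : Set ℕ) (i : ℕ) :
    ∑' k, S.indicator (mat f i) k = (cnt f S i : ℝ) / i := by
  have h : ∀ k, S.indicator (mat f i) k
      = (S.indicator (fun k => (cnt f {k} i : ℝ)) k) / i := by
    intro k
    rcases Classical.em (k ∈ S) with hk | hk
    · simp [Set.indicator_of_mem hk, mat]
    · simp [Set.indicator_of_notMem hk]
  simp_rw [h]
  rw [tsum_div_const, cnt_sum]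

lemma cnt_univ (f : ℕ → ℕ) (i : ℕ) : cnt f Set.univ i = i := by
  simp [cnt]

lemma cnt_le (f : ℕ → ℕ) (S : Set ℕ) (i : ℕ) : cnt f S i ≤ i := by
  calc cnt f S i ≤ (Finset.range i).card := Finset.card_filter_le _ _
  _ = i := Finset.card_range i

lemma cnt_eq_cnt_inter (f : ℕ → ℕ) (A B : Set ℕ) (hrange : Set.range f ⊆ A) (i : ℕ) :
    cnt f B i = cnt f (B ∩ A) i := by
  unfold cnt
  congr 1
  ext m
  simp only [Finset.mem_filter, Set.mem_inter_iff]
  have hfA : f m ∈ A := hrange ⟨m, rfl⟩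
  tauto

lemma cnt_self (f : ℕ → ℕ) (A : Set ℕ) (hrange : Set.range f ⊆ A) (i : ℕ) :
    cnt f A i = i := by
  unfold cnt
  rw [Finset.filter_true_of_mem, Finset.card_range]
  intro m _
  exact hrange ⟨m, rfl⟩

lemma mat_key (I : Set (Set ℕ)) (hI : IsIdeal I) (A : Set ℕ) (f : ℕ → ℕ)
    (hrange : Set.range f ⊆ A)
    (hdens : ∀ C ∈ I, f ⁻¹' (C ∩ A) ∈ densityZero) :
    IsRegularMatrix (mat f) ∧ (∀ B ∈ I, B ∈ matrixIdeal (mat f)) ∧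
      A ∉ matrixIdeal (mat f) := by
  obtain ⟨hfin, huniv, hsub, hun⟩ := hI
  have hrow : ∀ i : ℕ, 1 ≤ i → ∑' k, mat f i k = 1 := by
    intro i hi
    have h := tsum_indicator_mat f Set.univ i
    simp only [Set.indicator_univ] at h
    rw [h, cnt_univ]
    rw [div_self]
    exact_mod_cast Nat.one_le_iff_ne_zero.mp hi
  have hrow0 : ∑' k, mat f 0 k = 0 := by
    have h := tsum_indicator_mat f Set.univ 0
    simp only [Set.indicator_univ] at h
    rw [h, cnt_univ]
    simp
  have hAcnt : ∀ i, (∑' k, A.indicator (mat f i) k) = (i : ℝ) / i := by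
    intro i
    rw [tsum_indicator_mat, cnt_self f A hrange]
  refine ⟨⟨?_, ?_, ?_, ?_, ?_⟩, ?_, ?_⟩
  · intro i k
    exact div_nonneg (Nat.cast_nonneg _) (Nat.cast_nonneg _)
  · intro i
    apply summable_of_ne_finset_zero (s := (Finset.range i).image f)
    intro k hk
    simp [mat, cnt_zero_of_not_mem_image f i k hk]
  · refine ⟨1, fun i => ?_⟩
    rcases Nat.eq_zero_or_pos i with h | h
    · rw [h, hrow0]; norm_num
    · rw [hrow i h]
  · apply Tendsto.congr' (f₁ := fun _ => (1:ℝ))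
    · filter_upwards [eventually_ge_atTop 1] with i hi
      exact (hrow i hi).symm
    · exact tendsto_const_nhds
  · intro k
    by_cases hkA : k ∈ A
    · have hkI : ({k} : Set ℕ) ∈ I := hfin _ (Set.finite_singleton k)
      have := hdens _ hkI
      rw [Set.inter_eq_self_of_subset_left (Set.singleton_subset_iff.2 hkA)] at this
      rw [mem_densityZero_iff] at this
      exact this
    · have hz : ∀ i, mat f i k = 0 := by
        intro i
        have : cnt f {k} i = 0 := by
          unfold cnt
          simp only [Finset.card_eq_zero, Finset.filter_eq_empty_iff]
          intro m _ hmk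
          simp only [Set.mem_singleton_iff] at hmk
          exact hkA (hmk ▸ hrange ⟨m, rfl⟩)
        simp [mat, this]
      simp only [hz]
      exact tendsto_const_nhds
  · intro B hB
    have hd := hdens B hB
    rw [mem_densityZero_iff] at hd
    unfold matrixIdeal
    simp only [Set.mem_setOf_eq, tsum_indicator_mat]
    apply hd.congr
    intro i
    rw [cnt_eq_cnt_inter f A B hrange]
  · intro hmem
    unfold matrixIdeal at hmem
    simp only [Set.mem_setOf_eq, hAcnt] at hmem
    have h1 : Tendsto (fun i : ℕ => (i : ℝ) / i) atTop (nhds 1) := by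
      apply Tendsto.congr' (f₁ := fun _ => (1:ℝ))
      · filter_upwards [eventually_ge_atTop 1] with i hi
        rw [div_self]
        exact_mod_cast Nat.one_le_iff_ne_zero.mp hi
      · exact tendsto_const_nhds
    exact zero_ne_one (tendsto_nhds_unique hmem h1)

lemma backward (I : Set (Set ℕ)) (hI : IsIdeal I)
    (H : ∀ A : Set ℕ, A ∉ I → ∃ f : ℕ → ℕ, Set.range f ⊆ A ∧
      ∀ C ∈ I, f ⁻¹' (C ∩ A) ∈ densityZero) :
    ∃ 𝓜 : Set (ℕ → ℕ → ℝ), (∀ a ∈ 𝓜, IsRegularMatrix a) ∧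
      I = ⋂ a ∈ 𝓜, matrixIdeal a := by
  refine ⟨{m | ∃ A : Set ℕ, ∃ h : A ∉ I, m = mat (Classical.choose (H A h))}, ?_, ?_⟩
  · rintro a ⟨A, hA, rfl⟩
    obtain ⟨h1, h2⟩ := Classical.choose_spec (H A hA)
    exact (mat_key I hI A _ h1 h2).1
  · ext B
    simp only [Set.mem_iInter]
    constructor
    · rintro hB a ⟨A, hA, rfl⟩
      obtain ⟨h1, h2⟩ := Classical.choose_spec (H A hA)
      exact (mat_key I hI A _ h1 h2).2.1 B hB
    · intro h
      by_contra hB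
      obtain ⟨h1, h2⟩ := Classical.choose_spec (H B hB)
      exact (mat_key I hI B _ h1 h2).2.2 (h _ ⟨B, hB, rfl⟩)

/-! ### Helpers for the forward direction -/

lemma list_sum_toList (s : Finset ℕ) (f : ℕ → ℕ) : (s.toList.map f).sum = ∑ x ∈ s, f x := by
  rw [← Multiset.sum_coe, ← Multiset.map_coe, Finset.coe_toList]
  rfl

lemma countP_replicate (p : ℕ → Bool) (n x : ℕ) :
    (List.replicate n x).countP p = if p x then n else 0 := by
  rw [List.countP_eq_length_filter, List.filter_replicate]
  by_cases h : p x <;> simp [h]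

lemma length_pattern (F : Finset ℕ) (w : ℕ → ℕ) :
    (F.toList.flatMap fun k => List.replicate (w k) k).length = ∑ k ∈ F, w k := by
  rw [List.length_flatMap]
  have h : List.map (fun a => (List.replicate (w a) a).length) F.toList
      = F.toList.map w := by
    apply List.map_congr_left
    intro k _
    simp
  rw [h, list_sum_toList]

lemma countP_pattern (F : Finset ℕ) (w : ℕ → ℕ) (p : ℕ → Bool) :
    (F.toList.flatMap fun k => List.replicate (w k) k).countP p
      = ∑ k ∈ F, if p k then w k else 0 := by
  rw [List.flatMap_def, List.countP_flatten, List.map_map]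
  have h : List.map (List.countP p ∘ fun k => List.replicate (w k) k) F.toList
      = F.toList.map (fun k => if p k then w k else 0) := by
    apply List.map_congr_left
    intro k _
    simp [Function.comp, countP_replicate]
  rw [h, list_sum_toList]

lemma mem_pattern {F : Finset ℕ} {w : ℕ → ℕ} {y : ℕ}
    (h : y ∈ F.toList.flatMap fun k => List.replicate (w k) k) : y ∈ F := by
  rw [List.mem_flatMap] at h
  obtain ⟨k, hk, hy⟩ := h
  rw [List.eq_of_mem_replicate hy]
  exact Finset.mem_toList.1 hk

lemma count_getD (p : ℕ → Bool) (a0 : ℕ) : ∀ l : List ℕ,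
    (∑ i ∈ Finset.range l.length, if p (l.getD i a0) then 1 else 0) = l.countP p := by
  intro l
  induction l with
  | nil => simp
  | cons x xs ih =>
    rw [List.length_cons, Finset.sum_range_succ', List.countP_cons]
    simp only [List.getD_cons_succ, List.getD_cons_zero]
    rw [ih]

lemma cnt_add (f : ℕ → ℕ) (C : Set ℕ) (n m : ℕ) :
    cnt f C (n + m) = cnt f C n + ∑ i ∈ Finset.range m, if f (n + i) ∈ C then 1 else 0 := by
  unfold cnt
  simp only [Finset.card_filter]
  rw [Finset.sum_range_add]

section FG

variable {S : ℕ → ℕ}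

lemma fg_le (h0 : S 0 = 0) (x : ℕ) :
    S (Nat.findGreatest (fun t => S t ≤ x) x) ≤ x :=
  Nat.findGreatest_spec (P := fun t => S t ≤ x) (Nat.zero_le x) (by show S 0 ≤ x; rw [h0]; exact Nat.zero_le x)

lemma fg_lt (hmono : StrictMono S) (h0 : S 0 = 0) (x : ℕ) :
    x < S (Nat.findGreatest (fun t => S t ≤ x) x + 1) := by
  by_contra h
  push_neg at h
  have h1 : Nat.findGreatest (fun t => S t ≤ x) x + 1 ≤ x :=
    le_trans hmono.le_apply h
  have h2 := Nat.le_findGreatest (P := fun t => S t ≤ x) h1 h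
  omega

lemma fg_ge (hmono : StrictMono S) {x t : ℕ} (h : S t ≤ x) :
    t ≤ Nat.findGreatest (fun t => S t ≤ x) x :=
  Nat.le_findGreatest (P := fun t => S t ≤ x) (le_trans hmono.le_apply h) h

lemma fg_eq (hmono : StrictMono S) (h0 : S 0 = 0) {x t : ℕ} (h1 : S t ≤ x) (h2 : x < S (t + 1)) :
    Nat.findGreatest (fun t => S t ≤ x) x = t := by
  refine le_antisymm ?_ (fg_ge hmono h1)
  by_contra h
  push_neg at h
  have h3 : t + 1 ≤ Nat.findGreatest (fun t => S t ≤ x) x := h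
  have h4 : S (t + 1) ≤ S (Nat.findGreatest (fun t => S t ≤ x) x) := hmono.monotone h3
  have h5 := fg_le h0 x
  omega

end FG

lemma cesaro (ℓ c : ℕ → ℕ) (δ : ℕ → ℝ)
    (hℓ : ∀ u, 1 ≤ ℓ u) (hδ0 : ∀ u, 0 ≤ δ u)
    (hc : ∀ u, (c u : ℝ) ≤ δ u * (ℓ u : ℝ))
    (hδ : Tendsto δ atTop (nhds 0))
    (hblock : ∀ t, 1 ≤ t → ℓ t ≤ ∑ u ∈ Finset.range t, ℓ u) :
    Tendsto (fun t => (∑ u ∈ Finset.range (t + 1), (c u : ℝ)) /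
      (∑ u ∈ Finset.range t, (ℓ u : ℝ))) atTop (nhds 0) := by
  rw [Metric.tendsto_atTop]
  intro η hη
  obtain ⟨U, hU⟩ := Metric.tendsto_atTop.1 hδ (η / 4) (by positivity)
  have hUδ : ∀ u, U ≤ u → δ u ≤ η / 4 := by
    intro u hu
    have := hU u hu
    rw [Real.dist_eq, sub_zero, abs_of_nonneg (hδ0 u)] at this
    linarith
  set Sr : ℕ → ℝ := fun t => ∑ u ∈ Finset.range t, (ℓ u : ℝ) with hSr
  have hSrt : ∀ t : ℕ, (t : ℝ) ≤ Sr t := by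
    intro t
    calc (t : ℝ) = ∑ _u ∈ Finset.range t, (1 : ℝ) := by simp
    _ ≤ Sr t := by
        apply Finset.sum_le_sum
        intro u _
        exact_mod_cast hℓ u
  set K : ℝ := ∑ u ∈ Finset.range U, δ u * (ℓ u : ℝ) with hK
  have hK0 : 0 ≤ K := Finset.sum_nonneg fun u _ =>
    mul_nonneg (hδ0 u) (Nat.cast_nonneg _)
  refine ⟨max (max U 1) (⌈2 * K / η⌉₊ + 1), fun t ht => ?_⟩
  have htU : U ≤ t := le_trans (le_trans (le_max_left _ _) (le_max_left _ _)) ht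
  have ht1 : 1 ≤ t := le_trans (le_trans (le_max_right _ _) (le_max_left _ _)) ht
  have htK : (⌈2 * K / η⌉₊ + 1 : ℕ) ≤ t := le_trans (le_max_right _ _) ht
  have hSrpos : 0 < Sr t := lt_of_lt_of_le (by exact_mod_cast ht1) (hSrt t)
  have hSrK : 2 * K / η < Sr t := by
    have h1 : (2 * K / η : ℝ) ≤ ⌈2 * K / η⌉₊ := Nat.le_ceil _
    have h2 : ((⌈2 * K / η⌉₊ : ℝ) + 1 : ℝ) ≤ t := by exact_mod_cast htK
    linarith [hSrt t]
  have hnum : ∑ u ∈ Finset.range (t + 1), (c u : ℝ) ≤ K + η / 2 * Sr t := by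
    have h1 : ∑ u ∈ Finset.range (t + 1), (c u : ℝ)
        ≤ ∑ u ∈ Finset.range (t + 1), δ u * (ℓ u : ℝ) :=
      Finset.sum_le_sum fun u _ => hc u
    have hsplit : ∑ u ∈ Finset.range (t + 1), δ u * (ℓ u : ℝ)
        = K + ∑ u ∈ Finset.range (t + 1 - U), δ (U + u) * (ℓ (U + u) : ℝ) := by
      have hT : t + 1 = U + (t + 1 - U) := by omega
      rw [hK, hT, Finset.sum_range_add]
      simp
    have h2 : ∑ u ∈ Finset.range (t + 1 - U), δ (U + u) * (ℓ (U + u) : ℝ)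
        ≤ η / 4 * ∑ u ∈ Finset.range (t + 1 - U), (ℓ (U + u) : ℝ) := by
      rw [Finset.mul_sum]
      apply Finset.sum_le_sum
      intro u _
      exact mul_le_mul_of_nonneg_right (hUδ _ (Nat.le_add_right _ _)) (Nat.cast_nonneg _)
    have h3 : ∑ u ∈ Finset.range (t + 1 - U), (ℓ (U + u) : ℝ) ≤ Sr (t + 1) := by
      have : Sr (t + 1) = Sr U + ∑ u ∈ Finset.range (t + 1 - U), (ℓ (U + u) : ℝ) := by
        have hT : t + 1 = U + (t + 1 - U) := by omega
        rw [hSr]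
        simp only []
        rw [hT, Finset.sum_range_add]
        simp
      have hSrU : 0 ≤ Sr U := Finset.sum_nonneg fun u _ => Nat.cast_nonneg _
      linarith
    have h4 : Sr (t + 1) ≤ 2 * Sr t := by
      have he : Sr (t + 1) = Sr t + (ℓ t : ℝ) := Finset.sum_range_succ _ t
      have hb : (ℓ t : ℝ) ≤ Sr t := by
        have := hblock t ht1
        calc (ℓ t : ℝ) ≤ ((∑ u ∈ Finset.range t, ℓ u : ℕ) : ℝ) := by exact_mod_cast this
        _ = Sr t := by push_cast; rfl
      linarith
    have h3' : η / 4 * ∑ u ∈ Finset.range (t + 1 - U), (ℓ (U + u) : ℝ)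
        ≤ η / 4 * Sr (t + 1) :=
      mul_le_mul_of_nonneg_left h3 (by positivity)
    have h4' : η / 4 * Sr (t + 1) ≤ η / 4 * (2 * Sr t) :=
      mul_le_mul_of_nonneg_left h4 (by positivity)
    calc ∑ u ∈ Finset.range (t + 1), (c u : ℝ) ≤ K + η / 4 * Sr (t + 1) := by linarith
    _ ≤ K + η / 4 * (2 * Sr t) := by linarith
    _ = K + η / 2 * Sr t := by ring
  have hnn : 0 ≤ ∑ u ∈ Finset.range (t + 1), (c u : ℝ) :=
    Finset.sum_nonneg fun u _ => Nat.cast_nonneg _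
  rw [Real.dist_eq, sub_zero, abs_of_nonneg (div_nonneg hnn (le_of_lt hSrpos))]
  rw [div_lt_iff₀ hSrpos]
  have hKlt : K < η / 2 * Sr t := by
    rw [div_lt_iff₀ hη] at hSrK
    nlinarith
  nlinarith

lemma cnt_mono (f : ℕ → ℕ) (C : Set ℕ) {n n' : ℕ} (h : n ≤ n') :
    cnt f C n ≤ cnt f C n' :=
  Finset.card_le_card (Finset.filter_subset_filter _ (Finset.range_subset_range.2 h))

lemma getD_mem_or (l : List ℕ) (i : ℕ) (d : ℕ) : l.getD i d = d ∨ l.getD i d ∈ l := by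
  by_cases h : i < l.length
  · right
    rw [List.getD_eq_getElem l d h]
    exact List.getElem_mem h
  · left
    exact List.getD_eq_default l d (le_of_not_gt h)

lemma matrix_katetov (a : ℕ → ℕ → ℝ) (ha : IsRegularMatrix a) (A : Set ℕ)
    (hA : A.Nonempty) (hAm : A ∉ matrixIdeal a) :
    ∃ f : ℕ → ℕ, Set.range f ⊆ A ∧
      ∀ D : Set ℕ, D ∈ matrixIdeal a → f ⁻¹' D ∈ densityZero := by
  classical
  obtain ⟨hnn, hsumm, _hM, _hrow, _hcol⟩ := ha
  obtain ⟨a0, ha0⟩ := hA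
  set g : ℕ → ℝ := fun i => ∑' k, A.indicator (a i) k with hg
  have hg0 : ∀ i, 0 ≤ g i := fun i =>
    tsum_nonneg fun k => Set.indicator_nonneg (fun k _ => hnn i k) k
  have hAm' : ¬ Tendsto g atTop (nhds 0) := hAm
  rw [Metric.tendsto_atTop] at hAm'
  push_neg at hAm'
  obtain ⟨ε, hε, hfreq⟩ := hAm'
  have hfreq' : ∀ N : ℕ, ∃ i : ℕ, N ≤ i ∧ ε ≤ g i := by
    intro N
    obtain ⟨i, hiN, hi⟩ := hfreq N
    refine ⟨i, hiN, ?_⟩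
    rwa [Real.dist_eq, sub_zero, abs_of_nonneg (hg0 i)] at hi
  set r : ℕ → ℕ := fun j => (hfreq' j).choose with hr
  have hrge : ∀ j, j ≤ r j := fun j => (hfreq' j).choose_spec.1
  have hrε : ∀ j, ε ≤ g (r j) := fun j => (hfreq' j).choose_spec.2
  -- choose the finite sets F j
  have hF : ∀ j, ∃ F : Finset ℕ, ↑F ⊆ A ∧ ε / 2 ≤ ∑ k ∈ F, a (r j) k := by
    intro j
    have hsummInd : Summable (A.indicator (a (r j))) := (hsumm (r j)).indicator A
    have hhs := hsummInd.hasSum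
    have hev : ∀ᶠ s : Finset ℕ in atTop, ε / 2 < ∑ k ∈ s, A.indicator (a (r j)) k :=
      hhs.eventually (eventually_gt_nhds (by linarith [hrε j]))
    obtain ⟨s, hs⟩ := hev.exists
    refine ⟨s.filter (· ∈ A), ?_, ?_⟩
    · intro k hk
      simp only [Finset.coe_filter, Set.mem_setOf_eq] at hk
      exact hk.2
    · rw [Finset.sum_filter]
      refine le_trans (le_of_lt hs) (le_of_eq ?_)
      refine Finset.sum_congr rfl fun k _ => ?_
      rw [Set.indicator_apply]
  set F : ℕ → Finset ℕ := fun j => (hF j).choose with hFdef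
  have hFA : ∀ j, ↑(F j) ⊆ A := fun j => (hF j).choose_spec.1
  set T : ℕ → ℝ := fun j => ∑ k ∈ F j, a (r j) k with hT
  have hTε : ∀ j, ε / 2 ≤ T j := fun j => (hF j).choose_spec.2
  have hTpos : ∀ j, 0 < T j := fun j => lt_of_lt_of_le (by linarith) (hTε j)
  set L : ℕ → ℕ := fun j => (j + 1) * ((F j).card + 1) with hLdef
  have hL1 : ∀ j, 1 ≤ L j := fun j => Nat.one_le_iff_ne_zero.2 (by
    simp [hLdef])
  set w : ℕ → ℕ → ℕ := fun j k => ⌊(L j : ℝ) * a (r j) k / T j⌋₊ with hw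
  have hwle : ∀ j k, (w j k : ℝ) ≤ (L j : ℝ) * a (r j) k / T j := by
    intro j k
    exact Nat.floor_le (div_nonneg (mul_nonneg (Nat.cast_nonneg _) (hnn _ _))
      (le_of_lt (hTpos j)))
  have hsumwa : ∀ j, ∑ k ∈ F j, (L j : ℝ) * a (r j) k / T j = (L j : ℝ) := by
    intro j
    rw [← Finset.sum_div, ← Finset.mul_sum]
    rw [show (∑ k ∈ F j, a (r j) k) = T j from rfl]
    rw [mul_div_assoc, div_self (ne_of_gt (hTpos j)), mul_one]
  have hwsum : ∀ j, ∑ k ∈ F j, w j k ≤ L j := by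
    intro j
    have hreal : ((∑ k ∈ F j, w j k : ℕ) : ℝ) ≤ (L j : ℝ) := by
      push_cast
      calc ∑ k ∈ F j, (w j k : ℝ) ≤ ∑ k ∈ F j, (L j : ℝ) * a (r j) k / T j :=
            Finset.sum_le_sum fun k _ => hwle j k
      _ = (L j : ℝ) := hsumwa j
    exact_mod_cast hreal
  have hwlow : ∀ j, (L j : ℝ) - (F j).card ≤ ∑ k ∈ F j, (w j k : ℝ) := by
    intro j
    have hstep : ∀ k ∈ F j, (L j : ℝ) * a (r j) k / T j - 1 ≤ (w j k : ℝ) := by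
      intro k _
      have := Nat.sub_one_lt_floor ((L j : ℝ) * a (r j) k / T j)
      rw [hw]
      push_cast
      linarith
    calc (L j : ℝ) - (F j).card
        = ∑ k ∈ F j, ((L j : ℝ) * a (r j) k / T j - 1) := by
          rw [Finset.sum_sub_distrib, Finset.sum_const, hsumwa j]
          simp
      _ ≤ ∑ k ∈ F j, (w j k : ℝ) := Finset.sum_le_sum hstep
  set pad : ℕ → ℕ := fun j => L j - ∑ k ∈ F j, w j k with hpad
  have hpadR : ∀ j, (pad j : ℝ) ≤ ((F j).card : ℝ) := by
    intro j
    have h1 : (pad j : ℝ) = (L j : ℝ) - (∑ k ∈ F j, w j k : ℕ) := by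
      rw [hpad]
      push_cast [hwsum j]
      ring
    rw [h1]
    have : ((∑ k ∈ F j, w j k : ℕ) : ℝ) = ∑ k ∈ F j, (w j k : ℝ) := by push_cast; rfl
    rw [this]
    linarith [hwlow j]
  set P : ℕ → List ℕ :=
    fun j => ((F j).toList.flatMap fun k => List.replicate (w j k) k)
      ++ List.replicate (pad j) a0 with hP
  have hPlen : ∀ j, (P j).length = L j := by
    intro j
    rw [hP]
    simp only [List.length_append, List.length_replicate]
    rw [length_pattern]
    have := hwsum j
    simp only [hpad]
    omega
  have hPmem : ∀ j y, y ∈ P j → y ∈ A := by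
    intro j y hy
    rw [hP] at hy
    rcases List.mem_append.1 hy with h | h
    · exact hFA j (mem_pattern h)
    · rw [List.eq_of_mem_replicate h]; exact ha0
  -- count bound for each pattern
  have hPcount : ∀ (j : ℕ) (D : Set ℕ),
      ((P j).countP (fun x => decide (x ∈ D)) : ℝ)
        ≤ 2 / ε * (L j : ℝ) * (∑' k, D.indicator (a (r j)) k) + ((F j).card : ℝ) := by
    intro j D
    have hWnn : 0 ≤ ∑' k, D.indicator (a (r j)) k :=
      tsum_nonneg fun k => Set.indicator_nonneg (fun k _ => hnn _ k) k
    rw [hP, List.countP_append, countP_pattern]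
    have hc1 : ((List.replicate (pad j) a0).countP (fun x => decide (x ∈ D)) : ℝ)
        ≤ ((F j).card : ℝ) := by
      rw [countP_replicate]
      by_cases h : a0 ∈ D
      · have hd : (decide (a0 ∈ D)) = true := by simp [h]
        rw [hd, if_pos rfl]
        exact hpadR j
      · have hd : (decide (a0 ∈ D)) = false := by simp [h]
        rw [if_neg (by simp [hd])]
        norm_num
    have hc2 : ((∑ k ∈ F j, if decide (k ∈ D) = true then w j k else 0 : ℕ) : ℝ)
        ≤ 2 / ε * (L j : ℝ) * (∑' k, D.indicator (a (r j)) k) := by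
      have hsummD : Summable (D.indicator (a (r j))) := (hsumm (r j)).indicator D
      have e1 : ((∑ k ∈ F j, if decide (k ∈ D) = true then w j k else 0 : ℕ) : ℝ)
          = ∑ k ∈ F j, (if k ∈ D then (w j k : ℝ) else 0) := by
        rw [Nat.cast_sum]
        refine Finset.sum_congr rfl fun k _ => ?_
        by_cases h : k ∈ D <;> simp [h]
      rw [e1]
      have e2 : ∑ k ∈ F j, (if k ∈ D then (w j k : ℝ) else 0)
          ≤ ∑ k ∈ F j, (L j : ℝ) / T j * D.indicator (a (r j)) k := by
        refine Finset.sum_le_sum fun k _ => ?_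
        by_cases h : k ∈ D
        · simp only [h, if_true, Set.indicator_of_mem]
          calc (w j k : ℝ) ≤ (L j : ℝ) * a (r j) k / T j := hwle j k
          _ = (L j : ℝ) / T j * a (r j) k := by ring
        · simp only [h, if_false, Set.indicator_of_notMem, not_false_iff]
          simp
      have e3 : ∑ k ∈ F j, (L j : ℝ) / T j * D.indicator (a (r j)) k
          = (L j : ℝ) / T j * ∑ k ∈ F j, D.indicator (a (r j)) k := by
        rw [Finset.mul_sum]
      have e4 : ∑ k ∈ F j, D.indicator (a (r j)) k ≤ ∑' k, D.indicator (a (r j)) k :=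
        Summable.sum_le_tsum (F j) (fun k _ => Set.indicator_nonneg (fun k _ => hnn _ k) k) hsummD
      have e5 : (L j : ℝ) / T j ≤ 2 / ε * (L j : ℝ) := by
        rw [div_le_iff₀ (hTpos j)]
        have h2 : ε / 2 ≤ T j := hTε j
        have hL0 : (0 : ℝ) ≤ (L j : ℝ) := Nat.cast_nonneg _
        rw [mul_comm (2 / ε) (L j : ℝ), mul_assoc]
        refine le_mul_of_one_le_right hL0 ?_
        rw [← div_le_iff₀' (div_pos two_pos hε)]
        rw [one_div_div]
        linarith
      have e6 : (L j : ℝ) / T j * ∑ k ∈ F j, D.indicator (a (r j)) k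
          ≤ 2 / ε * (L j : ℝ) * (∑' k, D.indicator (a (r j)) k) := by
        have hsnn : 0 ≤ ∑ k ∈ F j, D.indicator (a (r j)) k :=
          Finset.sum_nonneg fun k _ => Set.indicator_nonneg (fun k _ => hnn _ k) k
        calc (L j : ℝ) / T j * ∑ k ∈ F j, D.indicator (a (r j)) k
            ≤ 2 / ε * (L j : ℝ) * ∑ k ∈ F j, D.indicator (a (r j)) k :=
              mul_le_mul_of_nonneg_right e5 hsnn
        _ ≤ 2 / ε * (L j : ℝ) * (∑' k, D.indicator (a (r j)) k) := by
            exact mul_le_mul_of_nonneg_left e4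
              (mul_nonneg (le_of_lt (div_pos two_pos hε)) (Nat.cast_nonneg _))
      linarith
    rw [Nat.cast_add]
    exact add_le_add hc2 hc1
  -- the schedule of blocks
  set m : ℕ → ℕ := fun j => L (j + 1) with hm
  set s : ℕ → ℕ := fun j => ∑ u ∈ Finset.range j, m u with hs
  have hs0 : s 0 = 0 := by simp [hs]
  have hssucc : ∀ j, s (j + 1) = s j + m j := fun j => Finset.sum_range_succ m j
  have hsmono : StrictMono s := strictMono_nat_of_lt_succ fun j => by
    rw [hssucc]
    have : 1 ≤ m j := hL1 (j + 1)
    omega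
  set b : ℕ → ℕ := fun t => Nat.findGreatest (fun j => s j ≤ t) t with hb
  have hbs : ∀ t, s (b t) ≤ t := fun t => fg_le hs0 t
  have hbs2 : ∀ t, t < s (b t + 1) := fun t => fg_lt hsmono hs0 t
  have hbeq : ∀ t j, s j ≤ t → t < s (j + 1) → b t = j := fun t j h1 h2 =>
    fg_eq hsmono hs0 h1 h2
  have hbge : ∀ t j, s j ≤ t → j ≤ b t := fun t j h => fg_ge hsmono h
  set ℓ : ℕ → ℕ := fun t => L (b t) with hℓ
  have hℓ1 : ∀ t, 1 ≤ ℓ t := fun t => hL1 (b t)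
  set S : ℕ → ℕ := fun t => ∑ u ∈ Finset.range t, ℓ u with hS
  have hS0 : S 0 = 0 := by simp [hS]
  have hSsucc : ∀ t, S (t + 1) = S t + ℓ t := fun t => Finset.sum_range_succ ℓ t
  have hSmono : StrictMono S := strictMono_nat_of_lt_succ fun t => by
    rw [hSsucc]
    have := hℓ1 t
    omega
  set B : ℕ → ℕ := fun x => Nat.findGreatest (fun t => S t ≤ x) x with hB
  have hBS : ∀ x, S (B x) ≤ x := fun x => fg_le hS0 x
  have hBS2 : ∀ x, x < S (B x + 1) := fun x => fg_lt hSmono hS0 x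
  have hBge : ∀ x t, S t ≤ x → t ≤ B x := fun x t h => fg_ge hSmono h
  have hBeq : ∀ x t, S t ≤ x → x < S (t + 1) → B x = t := fun x t h1 h2 =>
    fg_eq hSmono hS0 h1 h2
  set f : ℕ → ℕ := fun x => (P (b (B x))).getD (x - S (B x)) a0 with hf
  have hfblock : ∀ t i, i < ℓ t → f (S t + i) = (P (b t)).getD i a0 := by
    intro t i hi
    have hBi : B (S t + i) = t := hBeq _ _ (Nat.le_add_right _ _) (by rw [hSsucc]; omega)
    rw [hf]
    simp only [hBi, Nat.add_sub_cancel_left]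
  -- range of f
  have hfA : Set.range f ⊆ A := by
    rintro y ⟨x, rfl⟩
    rcases getD_mem_or (P (b (B x))) (x - S (B x)) a0 with h | h
    · rw [hf]
      simp only []
      rw [h]
      exact ha0
    · exact hPmem _ _ h
  -- counting at block boundaries
  have hcntS : ∀ (D : Set ℕ) t, cnt f D (S t)
      = ∑ u ∈ Finset.range t, (P (b u)).countP (fun x => decide (x ∈ D)) := by
    intro D t
    induction t with
    | zero => simp [hS0, cnt]
    | succ t ih =>
      rw [hSsucc, cnt_add, ih, Finset.sum_range_succ]
      congr 1
      have hcong : ∀ i ∈ Finset.range (ℓ t),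
          (if f (S t + i) ∈ D then (1:ℕ) else 0)
            = (if (fun x => decide (x ∈ D)) ((P (b t)).getD i a0) = true then 1 else 0) := by
        intro i hi
        rw [Finset.mem_range] at hi
        rw [hfblock t i hi]
        by_cases h : (P (b t)).getD i a0 ∈ D <;> simp [h]
      rw [Finset.sum_congr rfl hcong]
      simp only [hℓ]
      rw [← hPlen (b t)]
      exact count_getD (fun x => decide (x ∈ D)) a0 (P (b t))
  -- each block is no longer than the total before it
  have hblock : ∀ t, 1 ≤ t → ℓ t ≤ S t := by
    intro t ht
    by_cases hcase : s (b t) = t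
    · -- first block of a segment
      have hbt1 : 1 ≤ b t := by
        rcases Nat.eq_zero_or_pos (b t) with h | h
        · exfalso
          rw [h, hs0] at hcase
          omega
        · exact h
      have hbu : ∀ u, s (b t - 1) ≤ u → u < s (b t) → b u = b t - 1 := by
        intro u h1 h2
        refine hbeq u _ h1 ?_
        rwa [Nat.sub_one_add_one (by omega)]
      have hsub : Finset.Ico (s (b t - 1)) (s (b t)) ⊆ Finset.range t := by
        intro u hu
        rw [Finset.mem_Ico] at hu
        rw [Finset.mem_range]
        omega
      have h1 : ∑ u ∈ Finset.Ico (s (b t - 1)) (s (b t)), ℓ u ≤ S t := by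
        rw [hS]
        exact Finset.sum_le_sum_of_subset hsub
      have hcard : (Finset.Ico (s (b t - 1)) (s (b t))).card = m (b t - 1) := by
        rw [Nat.card_Ico]
        have h2 := hssucc (b t - 1)
        rw [Nat.sub_one_add_one (by omega)] at h2
        omega
      have h2 : m (b t - 1) ≤ ∑ u ∈ Finset.Ico (s (b t - 1)) (s (b t)), ℓ u := by
        calc m (b t - 1) = (Finset.Ico (s (b t - 1)) (s (b t))).card * 1 := by
              rw [hcard, mul_one]
        _ ≤ ∑ u ∈ Finset.Ico (s (b t - 1)) (s (b t)), ℓ u := by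
              rw [← smul_eq_mul]
              exact Finset.card_nsmul_le_sum _ _ _ fun u _ => hℓ1 u
      have hmeq : m (b t - 1) = ℓ t := by
        rw [hm, hℓ]
        simp only []
        rw [Nat.sub_one_add_one (by omega)]
      omega
    · -- not the first block of a segment
      have h1 : s (b t) ≤ t - 1 := by
        have := hbs t
        omega
      have h2 : t - 1 < s (b t + 1) := by
        have := hbs2 t
        omega
      have hb' : b (t - 1) = b t := hbeq (t - 1) (b t) h1 h2
      have h3 : ℓ (t - 1) ≤ S t := by
        rw [hS]
        refine Finset.single_le_sum (f := ℓ) (fun u _ => Nat.zero_le _) ?_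
        rw [Finset.mem_range]
        omega
      have h4 : ℓ (t - 1) = ℓ t := by
        rw [hℓ]
        simp only []
        rw [hb']
      omega
  -- conclusion
  refine ⟨f, hfA, ?_⟩
  intro D hD
  rw [mem_densityZero_iff]
  set W : ℕ → ℝ := fun j => ∑' k, D.indicator (a (r j)) k with hW
  have hWnn : ∀ j, 0 ≤ W j := fun j =>
    tsum_nonneg fun k => Set.indicator_nonneg (fun k _ => hnn _ k) k
  have hrT : Tendsto r atTop atTop := tendsto_atTop_mono hrge tendsto_id
  have hDt : Tendsto (fun i => ∑' k, D.indicator (a i) k) atTop (nhds 0) := hD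
  have hWt : Tendsto W atTop (nhds 0) := hDt.comp hrT
  set γ : ℕ → ℝ := fun j => 2 / ε * W j + 1 / (j + 1) with hγ
  have hγt : Tendsto γ atTop (nhds 0) := by
    have h1 : Tendsto (fun j : ℕ => 2 / ε * W j) atTop (nhds 0) := by
      have := hWt.const_mul (2 / ε)
      simpa using this
    have h2 := tendsto_one_div_add_atTop_nhds_zero_nat (𝕜 := ℝ)
    have h3 := h1.add h2
    rw [hγ]
    simpa using h3
  have hγnn : ∀ j, 0 ≤ γ j := fun j =>
    add_nonneg (mul_nonneg (le_of_lt (div_pos two_pos hε)) (hWnn j)) (by positivity)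
  set c : ℕ → ℕ := fun u => (P (b u)).countP (fun x => decide (x ∈ D)) with hc
  have hcℓ : ∀ u, c u ≤ ℓ u := by
    intro u
    rw [hc, hℓ]
    simp only []
    rw [← hPlen (b u)]
    exact List.countP_le_length
  have hcγ : ∀ u, (c u : ℝ) ≤ γ (b u) * (ℓ u : ℝ) := by
    intro u
    have h1 := hPcount (b u) D
    have hcardL : ((F (b u)).card : ℝ) * ((b u : ℝ) + 1) ≤ (L (b u) : ℝ) := by
      have hnat : (F (b u)).card * ((b u) + 1) ≤ L (b u) := by
        rw [hLdef]
        simp only []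
        calc (F (b u)).card * ((b u) + 1) = ((b u) + 1) * (F (b u)).card := mul_comm _ _
        _ ≤ ((b u) + 1) * ((F (b u)).card + 1) := Nat.mul_le_mul_left _ (Nat.le_succ _)
      exact_mod_cast hnat
    have hFL : ((F (b u)).card : ℝ) ≤ (L (b u) : ℝ) * (1 / ((b u : ℝ) + 1)) := by
      rw [mul_one_div, le_div_iff₀ (by positivity)]
      exact hcardL
    calc (c u : ℝ) ≤ 2 / ε * (L (b u) : ℝ) * W (b u) + ((F (b u)).card : ℝ) := h1
    _ ≤ 2 / ε * (L (b u) : ℝ) * W (b u) + (L (b u) : ℝ) * (1 / ((b u : ℝ) + 1)) := by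
        linarith
    _ = γ (b u) * (L (b u) : ℝ) := by
        rw [hγ]
        simp only []
        ring
    _ = γ (b u) * (ℓ u : ℝ) := by
        rw [hℓ]
  set δ : ℕ → ℝ := fun u => min 1 (γ (b u)) with hδdef
  have hδ0 : ∀ u, 0 ≤ δ u := fun u => le_min zero_le_one (hγnn (b u))
  have hδc : ∀ u, (c u : ℝ) ≤ δ u * (ℓ u : ℝ) := by
    intro u
    rcases min_cases 1 (γ (b u)) with ⟨heq, _hle⟩ | ⟨heq, _hle⟩
    · rw [hδdef]
      simp only []
      rw [heq, one_mul]
      exact_mod_cast hcℓ u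
    · rw [hδdef]
      simp only []
      rw [heq]
      exact hcγ u
  have hbT : Tendsto b atTop atTop := by
    rw [tendsto_atTop_atTop]
    intro j
    exact ⟨s j, fun t ht => hbge t j ht⟩
  have hδt : Tendsto δ atTop (nhds 0) := by
    apply squeeze_zero hδ0 (fun u => min_le_right _ _)
    exact hγt.comp hbT
  have hces := cesaro ℓ c δ hℓ1 hδ0 hδc hδt hblock
  rw [Metric.tendsto_atTop]
  intro η hη
  rw [Metric.tendsto_atTop] at hces
  obtain ⟨T0, hT0⟩ := hces η hη
  refine ⟨max (S (max T0 1)) 1, fun n hn => ?_⟩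
  have hn1 : 1 ≤ n := le_trans (le_max_right _ _) hn
  have hnS : S (max T0 1) ≤ n := le_trans (le_max_left _ _) hn
  have htge : max T0 1 ≤ B n := hBge n _ hnS
  have ht1 : 1 ≤ B n := le_trans (le_max_right _ _) htge
  have htT0 : T0 ≤ B n := le_trans (le_max_left _ _) htge
  have hcnt1 : cnt f D n ≤ ∑ u ∈ Finset.range (B n + 1), c u := by
    calc cnt f D n ≤ cnt f D (S (B n + 1)) := cnt_mono f D (le_of_lt (hBS2 n))
    _ = ∑ u ∈ Finset.range (B n + 1), c u := hcntS D (B n + 1)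
  have hSn : S (B n) ≤ n := hBS n
  have hSpos : 0 < S (B n) := by
    have h := hSmono.le_apply (x := B n)
    omega
  have hq : (cnt f D n : ℝ) / n
      ≤ (∑ u ∈ Finset.range (B n + 1), (c u : ℝ)) / (∑ u ∈ Finset.range (B n), (ℓ u : ℝ)) := by
    have hden : (∑ u ∈ Finset.range (B n), (ℓ u : ℝ)) = ((S (B n) : ℕ) : ℝ) := by
      rw [hS]
      push_cast
      rfl
    rw [hden]
    have hnum : (cnt f D n : ℝ) ≤ ∑ u ∈ Finset.range (B n + 1), (c u : ℝ) := by
      calc (cnt f D n : ℝ) ≤ ((∑ u ∈ Finset.range (B n + 1), c u : ℕ) : ℝ) := by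
            exact_mod_cast hcnt1
      _ = _ := by push_cast; rfl
    have hc0 : (0 : ℝ) ≤ (cnt f D n : ℝ) := Nat.cast_nonneg _
    have hSr : (0 : ℝ) < ((S (B n) : ℕ) : ℝ) := by exact_mod_cast hSpos
    have hnr : ((S (B n) : ℕ) : ℝ) ≤ (n : ℝ) := by exact_mod_cast hSn
    calc (cnt f D n : ℝ) / n ≤ (cnt f D n : ℝ) / ((S (B n) : ℕ) : ℝ) :=
          div_le_div_of_nonneg_left hc0 hSr hnr
    _ ≤ (∑ u ∈ Finset.range (B n + 1), (c u : ℝ)) / ((S (B n) : ℕ) : ℝ) :=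
          (div_le_div_iff_of_pos_right hSr).mpr hnum
  have hfinal := hT0 (B n) htT0
  rw [Real.dist_eq, sub_zero] at hfinal
  rw [Real.dist_eq, sub_zero]
  have h0 : 0 ≤ (cnt f D n : ℝ) / n := div_nonneg (Nat.cast_nonneg _) (Nat.cast_nonneg _)
  rw [abs_of_nonneg h0]
  calc (cnt f D n : ℝ) / n
      ≤ (∑ u ∈ Finset.range (B n + 1), (c u : ℝ)) / (∑ u ∈ Finset.range (B n), (ℓ u : ℝ)) := hq
  _ ≤ |(∑ u ∈ Finset.range (B n + 1), (c u : ℝ)) / (∑ u ∈ Finset.range (B n), (ℓ u : ℝ))| :=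
        le_abs_self _
  _ < η := hfinal


/-- An ideal `I` on `ℕ` is the intersection of a family of matrix summability ideals iff
`I ↾ A ≤_K I_d` for every `A ∉ I` (expressed via a function `f : ℕ → A`). -/
theorem stmt12 (I : Set (Set ℕ)) (hI : IsIdeal I) :
    (∃ 𝓜 : Set (ℕ → ℕ → ℝ), (∀ a ∈ 𝓜, IsRegularMatrix a) ∧
      I = ⋂ a ∈ 𝓜, matrixIdeal a) ↔
    ∀ A : Set ℕ, A ∉ I → ∃ f : ℕ → ℕ, Set.range f ⊆ A ∧
      ∀ C ∈ I, f ⁻¹' (C ∩ A) ∈ densityZero := by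
  constructor
  · rintro ⟨𝓜, h𝓜reg, hIeq⟩ A hA
    have hAmem : A ∉ ⋂ a ∈ 𝓜, matrixIdeal a := by rwa [← hIeq]
    rw [Set.mem_iInter₂] at hAmem
    push_neg at hAmem
    obtain ⟨a, ha𝓜, hAm⟩ := hAmem
    have hAne : A.Nonempty := by
      rcases Set.eq_empty_or_nonempty A with h | h
      · exact absurd (h ▸ hI.1 ∅ Set.finite_empty) hA
      · exact h
    obtain ⟨f, hf1, hf2⟩ := matrix_katetov a (h𝓜reg a ha𝓜) A hAne hAm
    refine ⟨f, hf1, fun C hC => ?_⟩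
    apply hf2
    have hCA : C ∩ A ∈ I := hI.2.2.1 (C ∩ A) C Set.inter_subset_left hC
    have hCA2 : C ∩ A ∈ ⋂ a ∈ 𝓜, matrixIdeal a := by rwa [← hIeq]
    rw [Set.mem_iInter₂] at hCA2
    exact hCA2 a ha𝓜
  · exact backward I hI
end

section
/- Let I be an ideal on ℕ. The following are equivalent: (1) I is an intersection of summable ideals; (2) for every A ∉ I there exists f : ℕ → [0,∞) with ∑_n f(n) = ∞ such that I↾A ≤_K I_f. -/
/-- The summable ideal generated by `f : ℕ → [0,∞)`. -/
def summableIdeal (f : ℕ → ℝ) : Set (Set ℕ) :=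
  {A | Summable (A.indicator f)}

lemma summable_indicator_mono {f : ℕ → ℝ} {s t : Set ℕ} (hst : s ⊆ t)
    (ht : Summable (t.indicator f)) : Summable (s.indicator f) := by
  have h : s.indicator (t.indicator f) = s.indicator f := by
    rw [Set.indicator_indicator, Set.inter_eq_self_of_subset_left hst]
  exact h ▸ ht.indicator s

lemma sigma_summable_iff {f : ℕ → ℝ} (hf : ∀ n, 0 ≤ f n) (h : ℕ → ℕ) :
    Summable f ↔ (∀ n, Summable fun x : {k // h k = n} => f x) ∧
      Summable fun n => ∑' x : {k // h k = n}, f (x : ℕ) := by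
  rw [← (Equiv.sigmaFiberEquiv h).summable_iff]
  exact summable_sigma_of_nonneg fun x => hf _

/-- An ideal `I` on `ℕ` is an intersection of summable ideals iff for every `A ∉ I` there is
a summable ideal `I_f` with `I ↾ A ≤_K I_f` (witnessed by `h : ℕ → A`). -/
theorem stmt16 (I : Set (Set ℕ)) (hI : IsIdeal I) :
    (∃ G : Set (ℕ → ℝ), (∀ g ∈ G, (∀ n, 0 ≤ g n) ∧ ¬ Summable g) ∧
      I = ⋂ g ∈ G, summableIdeal g) ↔
    ∀ A : Set ℕ, A ∉ I → ∃ f : ℕ → ℝ, (∀ n, 0 ≤ f n) ∧ ¬ Summable f ∧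
      ∃ h : ℕ → ℕ, Set.range h ⊆ A ∧ ∀ C ∈ I, h ⁻¹' (C ∩ A) ∈ summableIdeal f := by
  classical
  obtain ⟨hfin, huniv, hsub, hun⟩ := hI
  constructor
  · rintro ⟨G, hG, rfl⟩ A hA
    rw [Set.mem_iInter₂] at hA
    push_neg at hA
    obtain ⟨g, hgG, hAg⟩ := hA
    obtain ⟨hg0, -⟩ := hG g hgG
    -- A is nonempty
    have hAne : A.Nonempty := by
      rcases Set.eq_empty_or_nonempty A with rfl | hne
      · exact absurd (by simp only [summableIdeal, Set.mem_setOf_eq, Set.indicator_empty]; exact summable_zero) hAg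
      · exact hne
    obtain ⟨a₀, ha₀⟩ := hAne
    refine ⟨A.indicator g, fun n => Set.indicator_nonneg (fun n _ => hg0 n) n, hAg,
      fun n => if n ∈ A then n else a₀, ?_, ?_⟩
    · rintro x ⟨n, rfl⟩
      by_cases hn : n ∈ A <;> simp [hn, ha₀]
    · intro C hC
      have hCg : Summable (C.indicator g) := by
        have : C ∈ ⋂ g ∈ G, summableIdeal g := hC
        rw [Set.mem_iInter₂] at this
        exact this g hgG
      have key : ((fun n => if n ∈ A then n else a₀) ⁻¹' (C ∩ A)).indicator (A.indicator g)
          = (C ∩ A).indicator g := by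
        funext n
        by_cases hn : n ∈ A
        · by_cases hnC : n ∈ C <;>
            simp [Set.indicator_apply, Set.mem_preimage, hn, hnC]
        · simp [Set.indicator_apply, Set.mem_preimage, hn]
      show Summable _
      rw [key]
      exact summable_indicator_mono Set.inter_subset_left hCg
  · intro H
    refine ⟨{g | (∀ n, 0 ≤ g n) ∧ ¬ Summable g ∧ ∀ C ∈ I, C ∈ summableIdeal g},
      fun g hg => ⟨hg.1, hg.2.1⟩, ?_⟩
    ext A
    constructor
    · intro hA
      exact Set.mem_iInter₂.2 fun g hg => hg.2.2 A hA
    · intro hA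
      by_contra hAI
      obtain ⟨f, hf0, hfns, h, hrange, hpre⟩ := H A hAI
      -- fibers of h are summable for f
      have hfib : ∀ n, Summable ((h ⁻¹' {n}).indicator f) := by
        intro n
        by_cases hn : n ∈ A
        · have h1 : ({n} : Set ℕ) ∩ A = {n} := by
            rw [Set.inter_eq_self_of_subset_left]
            simpa using hn
          have := hpre {n} (hfin _ (Set.finite_singleton n))
          rwa [h1] at this
        · have : h ⁻¹' {n} = ∅ := by
            ext k
            simp only [Set.mem_preimage, Set.mem_singleton_iff, Set.mem_empty_iff_false,
              iff_false]
            intro hk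
            exact hn (hk ▸ hrange ⟨k, rfl⟩)
          rw [this]
          simp only [Set.indicator_empty]
          exact summable_zero
      have hfib' : ∀ n, Summable fun x : {k // h k = n} => f (x : ℕ) := by
        intro n
        exact (summable_subtype_iff_indicator (s := h ⁻¹' {n})).2 (hfib n)
      set g : ℕ → ℝ := fun n => ∑' x : {k // h k = n}, f (x : ℕ) with hgdef
      have hg0 : ∀ n, 0 ≤ g n := fun n => tsum_nonneg fun x => hf0 _
      have hgns : ¬ Summable g := by
        intro hgs
        exact hfns ((sigma_summable_iff hf0 h).2 ⟨hfib', hgs⟩)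
      -- g vanishes off A
      have hgA : ∀ n, n ∉ A → g n = 0 := by
        intro n hn
        have : IsEmpty {k // h k = n} := by
          constructor; rintro ⟨k, rfl⟩
          exact hn (hrange ⟨k, rfl⟩)
        exact tsum_empty
      have hgIdeal : ∀ C ∈ I, C ∈ summableIdeal g := by
        intro C hC
        have hF : Summable ((h ⁻¹' (C ∩ A)).indicator f) := hpre C hC
        have hF0 : ∀ n, 0 ≤ (h ⁻¹' (C ∩ A)).indicator f n :=
          fun n => Set.indicator_nonneg (fun n _ => hf0 n) n
        have hGsum : Summable fun n =>
            ∑' x : {k // h k = n}, (h ⁻¹' (C ∩ A)).indicator f (x : ℕ) :=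
          ((sigma_summable_iff hF0 h).1 hF).2
        have hle : ∀ n, C.indicator g n ≤
            ∑' x : {k // h k = n}, (h ⁻¹' (C ∩ A)).indicator f (x : ℕ) := by
          intro n
          by_cases hnC : n ∈ C
          · rw [Set.indicator_of_mem hnC]
            by_cases hnA : n ∈ A
            · have : ∀ x : {k // h k = n}, f (x : ℕ) = (h ⁻¹' (C ∩ A)).indicator f (x : ℕ) := by
                rintro ⟨k, rfl⟩
                rw [Set.indicator_of_mem]
                exact ⟨hnC, hnA⟩
              rw [hgdef]
              exact le_of_eq (tsum_congr this)
            · rw [hgA n hnA]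
              exact tsum_nonneg fun x => hF0 _
          · rw [Set.indicator_of_notMem hnC]
            exact tsum_nonneg fun x => hF0 _
        exact Summable.of_nonneg_of_le
          (fun n => Set.indicator_nonneg (fun n _ => hg0 n) n) hle hGsum
      have hgG : g ∈ {g | (∀ n, 0 ≤ g n) ∧ ¬ Summable g ∧ ∀ C ∈ I, C ∈ summableIdeal g} :=
        ⟨hg0, hgns, hgIdeal⟩
      have : A ∈ summableIdeal g := Set.mem_iInter₂.1 hA g hgG
      have hAg : A.indicator g = g := by
        funext n
        by_cases hn : n ∈ A
        · simp [hn]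
        · simp [hn, hgA n hn]
      rw [summableIdeal, Set.mem_setOf_eq, hAg] at this
      exact hgns this
end
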